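/- Let E_X, E_Z > 0. Let μ be the probability measure on ℝ given by the mixture μ = (E_X/(E_X+E_Z))·ν + (E_Z/(E_X+E_Z))·δ_0, where ν is the exponential distribution with rate 1/(E_X+E_Z) and δ_0 is the Dirac measure at 0. Then the convolution of μ with the exponential distribution with rate 1/E_Z equals the exponential distribution with rate 1/(E_X+E_Z). (In particular, μ has mean E_X, and an input with law μ added to independent exponential noise with mean E_Z produces an exponentially distributed output with mean E_X + E_Z.) -/

import Mathlib

open MeasureTheory ProbabilityTheory Real Set

lemma int_exp_mul {c : ℝ} (hc : c ≠ 0) (t : ℝ) :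
    ∫ x in (0:ℝ)..t, Real.exp (c * x) = (Real.exp (c * t) - 1) / c := by
  rw [intervalIntegral.integral_comp_mul_left (fun x => Real.exp x) hc]
  simp [integral_exp, mul_comm, div_eq_inv_mul]

lemma expMeasure_Iic {r : ℝ} (hr : 0 < r) (t : ℝ) :
    expMeasure r (Iic t) = ENNReal.ofReal (if 0 ≤ t then 1 - rexp (-(r * t)) else 0) := by
  rw [expMeasure, gammaMeasure, withDensity_apply _ measurableSet_Iic]
  exact lintegral_exponentialPDF_eq_antiDeriv hr t



lemma gamma2 : ∫ y in Ioi (0:ℝ), y * rexp (-y) = 1 := by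
  have h := (Real.Gamma_eq_integral (by norm_num : (0:ℝ) < 2)).symm
  have h2 : Real.Gamma 2 = 1 := by
    rw [show (2:ℝ) = 1 + 1 by norm_num, Real.Gamma_add_one one_ne_zero, Real.Gamma_one, mul_one]
  rw [h2] at h
  rw [← h]
  refine setIntegral_congr_fun measurableSet_Ioi fun x hx => ?_
  rw [show (2:ℝ) - 1 = 1 by norm_num, Real.rpow_one, mul_comm]

lemma integrableOn_mul_exp {r : ℝ} (hr : 0 < r) :
    IntegrableOn (fun x => x * rexp (-(r * x))) (Ioi (0:ℝ)) := by
  have hg : IntegrableOn (fun y => y * rexp (-y)) (Ioi (0:ℝ)) := by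
    have := Real.GammaIntegral_convergent (by norm_num : (0:ℝ) < 2)
    refine this.congr_fun (fun x hx => ?_) measurableSet_Ioi
    beta_reduce; rw [show (2:ℝ) - 1 = 1 by norm_num, Real.rpow_one, mul_comm]
  have h1 : IntegrableOn (fun x => (r * x) * rexp (-(r * x))) (Ioi (0:ℝ)) := by
    have := (integrableOn_Ioi_comp_mul_left_iff (fun y => y * rexp (-y)) 0 hr).2
      (by simpa using hg)
    simpa using this
  have h2 : IntegrableOn (fun x => r⁻¹ * ((r * x) * rexp (-(r * x)))) (Ioi (0:ℝ)) :=
    h1.const_mul _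
  refine h2.congr_fun (fun x _ => ?_) measurableSet_Ioi
  field_simp

lemma integral_mul_exp {r : ℝ} (hr : 0 < r) :
    ∫ x in Ioi (0:ℝ), x * rexp (-(r * x)) = 1 / r ^ 2 := by
  have h := integral_comp_mul_left_Ioi (fun y => y * rexp (-y)) 0 hr
  simp only [mul_zero, smul_eq_mul, gamma2] at h
  have h3 : ∫ x in Ioi (0:ℝ), (r * x) * rexp (-(r * x)) = r⁻¹ := by simpa using h
  have h2 : ∫ x in Ioi (0:ℝ), x * rexp (-(r * x))
      = r⁻¹ * ∫ x in Ioi (0:ℝ), (r * x) * rexp (-(r * x)) := by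
    rw [← integral_const_mul]
    refine setIntegral_congr_fun measurableSet_Ioi fun x _ => ?_
    field_simp
  rw [h2, h3, sq]
  field_simp


lemma measurable_expPDF (r : ℝ) : Measurable (exponentialPDF r) :=
  (measurable_exponentialPDFReal r).ennreal_ofReal

lemma expMeasure_eq (r : ℝ) : expMeasure r = volume.withDensity (exponentialPDF r) := rfl

lemma exp_pdf_toReal_eq {r : ℝ} (hr : 0 < r) :
    (fun x => x * (exponentialPDF r x).toReal)
      = (Ioi (0:ℝ)).indicator (fun x => x * (r * rexp (-(r * x)))) := by
  funext x
  rcases lt_trichotomy x 0 with h | h | h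
  · rw [exponentialPDF_of_neg h, indicator_of_notMem (by simpa using h.le)]
    simp
  · subst h; simp
  · rw [exponentialPDF_of_nonneg h.le, indicator_of_mem (mem_Ioi.2 h),
      ENNReal.toReal_ofReal (by positivity : (0:ℝ) ≤ r * rexp (-(r*x)))]

lemma integrable_id_expMeasure {r : ℝ} (hr : 0 < r) :
    Integrable (fun x => x) (expMeasure r) := by
  rw [expMeasure_eq]
  rw [integrable_withDensity_iff (measurable_expPDF r)
    (ae_of_all _ fun x => ENNReal.ofReal_lt_top)]
  rw [exp_pdf_toReal_eq hr, integrable_indicator_iff measurableSet_Ioi]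
  have : IntegrableOn (fun x => r * (x * rexp (-(r * x)))) (Ioi (0:ℝ)) :=
    (integrableOn_mul_exp hr).const_mul r
  refine this.congr_fun (fun x _ => ?_) measurableSet_Ioi
  ring

lemma ae_nonneg_expMeasure {r : ℝ} : 0 ≤ᵐ[expMeasure r] fun x => x := by
  rw [Filter.EventuallyLE, ae_iff]
  have : {x : ℝ | ¬ (0:ℝ) ≤ x} = Iio 0 := by ext x; simp
  rw [expMeasure, gammaMeasure]
  simp only [Pi.zero_apply]
  rw [this, withDensity_apply _ measurableSet_Iio]
  exact lintegral_gammaPDF_of_nonpos le_rfl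

lemma integral_id_expMeasure {r : ℝ} (hr : 0 < r) :
    ∫ x, x ∂(expMeasure r) = 1 / r := by
  rw [integral_eq_lintegral_of_nonneg_ae ae_nonneg_expMeasure
    (integrable_id_expMeasure hr).aestronglyMeasurable]
  have h1 : ∫⁻ x, ENNReal.ofReal x ∂(expMeasure r)
      = ∫⁻ x, exponentialPDF r x * ENNReal.ofReal x := by
    have hg : Measurable fun x : ℝ => ENNReal.ofReal x := by fun_prop
    rw [expMeasure_eq, lintegral_withDensity_eq_lintegral_mul _ (measurable_expPDF r) hg]
    rfl
  have h2 : ∀ x, exponentialPDF r x * ENNReal.ofReal x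
      = (Ioi (0:ℝ)).indicator (fun x => ENNReal.ofReal (x * (r * rexp (-(r * x))))) x := by
    intro x
    rcases lt_trichotomy x 0 with h | h | h
    · rw [exponentialPDF_of_neg h, indicator_of_notMem (by simpa using h.le)]
      simp
    · subst h; simp
    · rw [exponentialPDF_of_nonneg h.le, indicator_of_mem (mem_Ioi.2 h), ← ENNReal.ofReal_mul (by positivity)]
      ring_nf
  rw [h1, lintegral_congr h2, lintegral_indicator measurableSet_Ioi _,
    ← ofReal_integral_eq_lintegral_ofReal]
  · rw [show ∫ x in Ioi (0:ℝ), x * (r * rexp (-(r * x)))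
        = r * ∫ x in Ioi (0:ℝ), x * rexp (-(r * x)) by
      rw [← integral_const_mul]
      exact setIntegral_congr_fun measurableSet_Ioi fun x _ => by ring]
    rw [integral_mul_exp hr, ENNReal.toReal_ofReal (by positivity)]
    field_simp
  · have : IntegrableOn (fun x => r * (x * rexp (-(r * x)))) (Ioi (0:ℝ)) :=
      (integrableOn_mul_exp hr).const_mul r
    refine this.congr_fun (fun x _ => ?_) measurableSet_Ioi
    ring
  · refine (ae_restrict_iff' measurableSet_Ioi).2 (ae_of_all _ fun x hx => ?_)
    have : (0:ℝ) < x := hx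
    positivity

theorem conv_part (EX EZ : ℝ) (hEX : 0 < EX) (hEZ : 0 < EZ) :
    (ENNReal.ofReal (EX / (EX + EZ)) • expMeasure (1 / (EX + EZ)) +
          ENNReal.ofReal (EZ / (EX + EZ)) • Measure.dirac (0 : ℝ)).conv
        (expMeasure (1 / EZ)) = expMeasure (1 / (EX + EZ)) := by
  have ha : 0 < EX + EZ := by linarith
  set l : ℝ := 1 / (EX + EZ) with hl_def
  set m : ℝ := 1 / EZ with hm_def
  have hl : 0 < l := by positivity
  have hm : 0 < m := by positivity
  have hlm : l < m := by
    rw [hl_def, hm_def, div_lt_div_iff₀ ha hEZ]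
    linarith
  set p : ℝ := EX / (EX + EZ) with hp_def
  set q : ℝ := EZ / (EX + EZ) with hq_def
  have hp : 0 ≤ p := by positivity
  have hq : 0 ≤ q := by positivity
  haveI hPl : IsProbabilityMeasure (expMeasure l) := isProbabilityMeasure_expMeasure hl
  haveI hPm : IsProbabilityMeasure (expMeasure m) := isProbabilityMeasure_expMeasure hm
  set M : Measure ℝ :=
    ENNReal.ofReal p • expMeasure l + ENNReal.ofReal q • Measure.dirac (0 : ℝ) with hM_def
  haveI : IsFiniteMeasure M := by
    constructor
    rw [hM_def]
    simp only [Measure.add_apply, Measure.smul_apply, smul_eq_mul, measure_univ,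
      Measure.dirac_apply_of_mem (mem_univ _), mul_one]
    exact ENNReal.add_lt_top.2 ⟨ENNReal.ofReal_lt_top, ENNReal.ofReal_lt_top⟩
  haveI : IsFiniteMeasure (M.conv (expMeasure m)) := by
    exact Measure.finite_of_finite_conv M (expMeasure m)
  refine Measure.ext_of_Iic (M.conv (expMeasure m)) (expMeasure l) fun t => ?_
  -- compute LHS applied to Iic t
  have hNIic : ∀ s : ℝ, expMeasure m (Iic s)
      = ENNReal.ofReal (if 0 ≤ s then 1 - rexp (-(m * s)) else 0) := expMeasure_Iic hm
  have hconv : M.conv (expMeasure m) (Iic t)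
      = ∫⁻ a, expMeasure m (Iic (t - a)) ∂M := by
    rw [Measure.conv, Measure.map_apply measurable_add measurableSet_Iic,
      Measure.prod_apply (measurable_add measurableSet_Iic)]
    refine lintegral_congr fun a => ?_
    congr 1
    ext b
    simp [le_sub_iff_add_le']
  rw [hconv, hM_def, lintegral_add_measure, lintegral_smul_measure, lintegral_smul_measure,
    lintegral_dirac]
  have hinner : ∫⁻ a, expMeasure m (Iic (t - a)) ∂(expMeasure l)
      = ∫⁻ a, exponentialPDF l a
          * ENNReal.ofReal (if 0 ≤ t - a then 1 - rexp (-(m * (t - a))) else 0) := by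
    simp_rw [hNIic]
    rw [expMeasure_eq, lintegral_withDensity_eq_lintegral_mul_non_measurable _
      (measurable_expPDF l) (ae_of_all _ fun x => ENNReal.ofReal_lt_top)]
    rfl
  rw [hinner, hNIic, expMeasure_Iic hl]
  rcases lt_or_ge t 0 with ht | ht
  · rw [if_neg (not_le.2 ht), if_neg (by simpa using not_le.2 ht)]
    have hzero : ∀ a : ℝ, exponentialPDF l a
        * ENNReal.ofReal (if 0 ≤ t - a then 1 - rexp (-(m * (t - a))) else 0) = 0 := by
      intro a
      rcases lt_or_ge a 0 with h | h
      · rw [exponentialPDF_of_neg h, zero_mul]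
      · rw [if_neg (by linarith), ENNReal.ofReal_zero, mul_zero]
    rw [lintegral_congr hzero, lintegral_zero]
    simp
  · rw [if_pos ht, if_pos (by simpa using ht)]
    -- rewrite integrand as indicator
    set f : ℝ → ℝ := fun a => l * rexp (-(l * a)) * (1 - rexp (-(m * (t - a)))) with hf_def
    have hind : ∀ a : ℝ, exponentialPDF l a
        * ENNReal.ofReal (if 0 ≤ t - a then 1 - rexp (-(m * (t - a))) else 0)
        = (Icc 0 t).indicator (fun a => ENNReal.ofReal (f a)) a := by
      intro a
      rcases lt_or_ge a 0 with h0 | h0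
      · rw [exponentialPDF_of_neg h0, zero_mul,
          indicator_of_notMem (fun hmem => absurd hmem.1 (not_le.2 h0))]
      rcases le_or_gt a t with h1 | h1
      · rw [exponentialPDF_of_nonneg h0, if_pos (by linarith),
          indicator_of_mem (mem_Icc.2 ⟨h0, h1⟩),
          ← ENNReal.ofReal_mul (by positivity)]
      · rw [if_neg (by linarith), ENNReal.ofReal_zero, mul_zero,
          indicator_of_notMem (fun hmem => absurd hmem.2 (not_le.2 h1))]
    rw [lintegral_congr hind, lintegral_indicator measurableSet_Icc]
    have hfi : IntegrableOn f (Icc 0 t) := by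
      apply Continuous.integrableOn_Icc
      fun_prop
    have hfnn : 0 ≤ᵐ[volume.restrict (Icc 0 t)] f := by
      refine (ae_restrict_iff' measurableSet_Icc).2 (ae_of_all _ fun a ha => ?_)
      have h2 : rexp (-(m * (t - a))) ≤ 1 := by
        rw [exp_le_one_iff]
        have := ha.2
        nlinarith [hm]
      have : 0 ≤ 1 - rexp (-(m * (t - a))) := by linarith
      positivity
    rw [← ofReal_integral_eq_lintegral_ofReal hfi hfnn]
    -- compute the real integral
    have hJval : ∫ a in Icc (0:ℝ) t, f a
        = l * ((rexp (-l * t) - 1) / (-l))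
          - l * rexp (-(m * t)) * ((rexp ((m - l) * t) - 1) / (m - l)) := by
      rw [integral_Icc_eq_integral_Ioc, ← intervalIntegral.integral_of_le ht]
      have hfeq : ∀ a : ℝ, f a
          = l * rexp (-l * a) - (l * rexp (-(m * t))) * rexp ((m - l) * a) := by
        intro a
        rw [hf_def]
        have he : rexp (-(l * a)) * rexp (-(m * (t - a)))
            = rexp (-(m * t)) * rexp ((m - l) * a) := by
          rw [← Real.exp_add, ← Real.exp_add]; ring_nf
        have he2 : rexp (-(l * a)) = rexp (-l * a) := by ring_nf
        calc l * rexp (-(l * a)) * (1 - rexp (-(m * (t - a))))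
            = l * rexp (-(l * a)) - l * (rexp (-(l * a)) * rexp (-(m * (t - a)))) := by ring
          _ = l * rexp (-l * a) - (l * rexp (-(m * t))) * rexp ((m - l) * a) := by
              rw [he, he2]; ring
      simp_rw [hfeq]
      rw [intervalIntegral.integral_sub
        (by apply Continuous.intervalIntegrable; fun_prop)
        (by apply Continuous.intervalIntegrable; fun_prop),
        intervalIntegral.integral_const_mul, intervalIntegral.integral_const_mul,
        int_exp_mul (by linarith : (-l : ℝ) ≠ 0), int_exp_mul (by linarith : m - l ≠ 0)]
    have hJnn : 0 ≤ ∫ a in Icc (0:ℝ) t, f a := integral_nonneg_of_ae hfnn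
    rw [hJval] at hJnn ⊢
    rw [smul_eq_mul, smul_eq_mul, ← ENNReal.ofReal_mul hp, ← ENNReal.ofReal_mul hq, ← ENNReal.ofReal_add
      (mul_nonneg hp hJnn)
      (mul_nonneg hq (by simp [sub_nonneg, exp_le_one_iff]; positivity))]
    congr 1
    have hC : rexp ((m - l) * t) = rexp (-(l * t)) / rexp (-(m * t)) := by
      rw [eq_div_iff (exp_ne_zero _), ← Real.exp_add]; ring_nf
    rw [hC]
    have hB : rexp (-(m * t)) ≠ 0 := exp_ne_zero _
    have he2 : rexp (-l * t) = rexp (-(l * t)) := by ring_nf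
    rw [he2, hp_def, hq_def, hl_def, hm_def]
    have h1 : (1:ℝ)/EZ - 1/(EX+EZ) ≠ 0 := by
      rw [div_sub_div _ _ hEZ.ne' ha.ne']
      have : EX + EZ - EZ = EX := by ring
      simp only [one_mul, mul_one, this]
      positivity
    field_simp
    field_simp [hEX.ne']
    ring

theorem mean_part (EX EZ : ℝ) (hEX : 0 < EX) (hEZ : 0 < EZ) :
    ∫ x, x ∂(ENNReal.ofReal (EX / (EX + EZ)) • expMeasure (1 / (EX + EZ)) +
          ENNReal.ofReal (EZ / (EX + EZ)) • Measure.dirac (0 : ℝ)) = EX := by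
  have ha : 0 < EX + EZ := by linarith
  have hl : 0 < 1 / (EX + EZ) := by positivity
  have h1 : Integrable (fun x : ℝ => x)
      (ENNReal.ofReal (EX / (EX + EZ)) • expMeasure (1 / (EX + EZ))) :=
    (integrable_id_expMeasure hl).smul_measure ENNReal.ofReal_ne_top
  have h2 : Integrable (fun x : ℝ => x)
      (ENNReal.ofReal (EZ / (EX + EZ)) • Measure.dirac (0 : ℝ)) := by
    refine Integrable.smul_measure ?_ ENNReal.ofReal_ne_top
    have heq : (fun x : ℝ => x) =ᵐ[Measure.dirac 0] fun _ => (0:ℝ) := by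
      rw [Filter.EventuallyEq, MeasureTheory.ae_dirac_eq]
      simp
    exact (integrable_const (0:ℝ)).congr heq.symm
  rw [integral_add_measure h1 h2, integral_smul_measure, integral_smul_measure,
    integral_dirac (fun x : ℝ => x) 0, integral_id_expMeasure hl,
    ENNReal.toReal_ofReal (by positivity), ENNReal.toReal_ofReal (by positivity)]
  simp only [smul_eq_mul, mul_zero, add_zero, one_div, div_mul_eq_mul_div]
  rw [div_eq_iff ha.ne']
  field_simp


open MeasureTheory ProbabilityTheory in
/-- **Equation (15) of the paper** (capacity-achieving input for the AEN channel): the mixture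
`μ = (E_X/(E_X+E_Z)) · Exp(1/(E_X+E_Z)) + (E_Z/(E_X+E_Z)) · δ₀` has mean `E_X`, and its
convolution with the exponential distribution of rate `1/E_Z` (mean `E_Z`) is the exponential
distribution of rate `1/(E_X+E_Z)` (mean `E_X+E_Z`). -/
theorem AEN_optimal_input_convolution (EX EZ : ℝ) (hEX : 0 < EX) (hEZ : 0 < EZ) :
    (ENNReal.ofReal (EX / (EX + EZ)) • expMeasure (1 / (EX + EZ)) +
          ENNReal.ofReal (EZ / (EX + EZ)) • Measure.dirac (0 : ℝ)).conv
        (expMeasure (1 / EZ)) = expMeasure (1 / (EX + EZ)) ∧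
      ∫ x, x ∂(ENNReal.ofReal (EX / (EX + EZ)) • expMeasure (1 / (EX + EZ)) +
          ENNReal.ofReal (EZ / (EX + EZ)) • Measure.dirac (0 : ℝ)) = EX :=
  ⟨conv_part EX EZ hEX hEZ, mean_part EX EZ hEX hEZ⟩
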